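/- D satisfies the triangle inequality: for any unitary operators U, V, W on a finite-dimensional Hilbert space, D(U,W) ≤ D(U,V) + D(V,W). -/

import Mathlib

open scoped InnerProductSpace

variable {H : Type*} [NormedAddCommGroup H] [InnerProductSpace ℂ H] [FiniteDimensional ℂ H]

noncomputable def Dpsi (U V : H →L[ℂ] H) (ψ : H) : ℝ :=
  Real.sqrt (1 - ‖⟪ψ, (star U * V) ψ⟫_ℂ‖ ^ 2)

noncomputable def uDist (U V : H →L[ℂ] H) : ℝ :=
  sSup {d : ℝ | ∃ ψ : H, ‖ψ‖ = 1 ∧ d = Dpsi U V ψ}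

private lemma scalar_key {a b c A B : ℝ} (ha : 0 ≤ a) (hb : 0 ≤ b) (hc : 0 ≤ c)
    (ha1 : a ≤ 1) (hb1 : b ≤ 1) (hA0 : 0 ≤ A) (hB0 : 0 ≤ B)
    (hA : A ^ 2 = 1 - a ^ 2) (hB : B ^ 2 = 1 - b ^ 2) (hcon : a * b - A * B ≤ c) :
    1 - c ^ 2 ≤ (A + B) ^ 2 := by
  rcases le_or_gt (a * b) (A * B) with h | h
  · nlinarith [mul_self_le_mul_self (mul_nonneg ha hb) h, sq_nonneg c,
      mul_nonneg hA0 hB0]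
  · have h1 : 0 ≤ a * b - A * B := by linarith
    have h2 : a * b ≤ 1 := mul_le_one₀ ha1 hb hb1
    nlinarith [mul_self_le_mul_self h1 hcon, mul_nonneg hA0 hB0,
      mul_nonneg (mul_nonneg hA0 hB0) (by linarith : (0:ℝ) ≤ 1 - a * b)]

private lemma inner_proj_sub (x y z : H) (hy : ‖y‖ = 1) :
    ⟪x - ⟪y, x⟫_ℂ • y, z - ⟪y, z⟫_ℂ • y⟫_ℂ = ⟪x, z⟫_ℂ - ⟪x, y⟫_ℂ * ⟪y, z⟫_ℂ := by
  have hyy : ⟪y, y⟫_ℂ = 1 := by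
    rw [inner_self_eq_norm_sq_to_K, hy]; norm_num
  simp only [inner_sub_left, inner_sub_right, inner_smul_left, inner_smul_right,
    inner_conj_symm, hyy]
  ring

private lemma norm_proj_sub (x y : H) (hx : ‖x‖ = 1) (hy : ‖y‖ = 1) :
    ‖x - ⟪y, x⟫_ℂ • y‖ = Real.sqrt (1 - ‖⟪x, y⟫_ℂ‖ ^ 2) := by
  have h : ‖x - ⟪y, x⟫_ℂ • y‖ ^ 2 = 1 - ‖⟪x, y⟫_ℂ‖ ^ 2 := by
    have := @norm_sub_sq ℂ H _ _ _ x (⟪y, x⟫_ℂ • y)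
    have h1 : ⟪x, ⟪y, x⟫_ℂ • y⟫_ℂ = ⟪y, x⟫_ℂ * ⟪x, y⟫_ℂ := by
      rw [inner_smul_right]
    have h2 : RCLike.re (⟪y, x⟫_ℂ * ⟪x, y⟫_ℂ) = ‖⟪x, y⟫_ℂ‖ ^ 2 := by
      rw [← inner_conj_symm x y, Complex.mul_conj]
      simp
      rw [Complex.normSq_eq_norm_sq, norm_inner_symm]
    have h3 : ‖⟪y, x⟫_ℂ • y‖ = ‖⟪x, y⟫_ℂ‖ := by
      rw [norm_smul, hy, mul_one, norm_inner_symm y x]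
    rw [this, h1, h2, h3, hx]
    ring
  rw [← h, Real.sqrt_sq (norm_nonneg _)]

private lemma tri_unit (x y z : H) (hx : ‖x‖ = 1) (hy : ‖y‖ = 1) (hz : ‖z‖ = 1) :
    Real.sqrt (1 - ‖⟪x, z⟫_ℂ‖ ^ 2) ≤
      Real.sqrt (1 - ‖⟪x, y⟫_ℂ‖ ^ 2) + Real.sqrt (1 - ‖⟪y, z⟫_ℂ‖ ^ 2) := by
  set a := ‖⟪x, y⟫_ℂ‖ with hadef
  set b := ‖⟪y, z⟫_ℂ‖ with hbdef
  set c := ‖⟪x, z⟫_ℂ‖ with hcdef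
  have ha1 : a ≤ 1 := by
    have := norm_inner_le_norm (𝕜 := ℂ) x y; rw [hx, hy] at this; simpa using this
  have hb1 : b ≤ 1 := by
    have := norm_inner_le_norm (𝕜 := ℂ) y z; rw [hy, hz] at this; simpa using this
  have hc1 : c ≤ 1 := by
    have := norm_inner_le_norm (𝕜 := ℂ) x z; rw [hx, hz] at this; simpa using this
  set A := Real.sqrt (1 - a ^ 2) with hAdef
  set B := Real.sqrt (1 - b ^ 2) with hBdef
  have hA : A ^ 2 = 1 - a ^ 2 := Real.sq_sqrt (by nlinarith [norm_nonneg ⟪x, y⟫_ℂ])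
  have hB : B ^ 2 = 1 - b ^ 2 := Real.sq_sqrt (by nlinarith [norm_nonneg ⟪y, z⟫_ℂ])
  have hcon : a * b - A * B ≤ c := by
    have hinner := inner_proj_sub x y z hy
    have hCS : ‖⟪x - ⟪y, x⟫_ℂ • y, z - ⟪y, z⟫_ℂ • y⟫_ℂ‖ ≤ A * B := by
      calc ‖⟪x - ⟪y, x⟫_ℂ • y, z - ⟪y, z⟫_ℂ • y⟫_ℂ‖
          ≤ ‖x - ⟪y, x⟫_ℂ • y‖ * ‖z - ⟪y, z⟫_ℂ • y‖ := norm_inner_le_norm _ _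
        _ = A * B := by rw [norm_proj_sub x y hx hy, norm_proj_sub z y hz hy,
              norm_inner_symm z y]
    have htri : a * b - c ≤ ‖⟪x, y⟫_ℂ * ⟪y, z⟫_ℂ - ⟪x, z⟫_ℂ‖ := by
      have := norm_sub_norm_le (⟪x, y⟫_ℂ * ⟪y, z⟫_ℂ) ⟪x, z⟫_ℂ
      calc a * b - c = ‖⟪x, y⟫_ℂ * ⟪y, z⟫_ℂ‖ - c := by rw [norm_mul]
        _ ≤ _ := this
    have heq : ‖⟪x, y⟫_ℂ * ⟪y, z⟫_ℂ - ⟪x, z⟫_ℂ‖ =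
        ‖⟪x - ⟪y, x⟫_ℂ • y, z - ⟪y, z⟫_ℂ • y⟫_ℂ‖ := by
      rw [hinner, ← norm_neg]; ring_nf
    linarith [heq ▸ htri]
  have key : 1 - c ^ 2 ≤ (A + B) ^ 2 :=
    scalar_key (norm_nonneg _) (norm_nonneg _) (norm_nonneg _) ha1 hb1
      (Real.sqrt_nonneg _) (Real.sqrt_nonneg _) hA hB hcon
  calc Real.sqrt (1 - c ^ 2) ≤ Real.sqrt ((A + B) ^ 2) := Real.sqrt_le_sqrt key
    _ = A + B := Real.sqrt_sq (by positivity)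

private lemma Dpsi_tri {U V W : H →L[ℂ] H} (hU : U ∈ unitary (H →L[ℂ] H))
    (hV : V ∈ unitary (H →L[ℂ] H)) (hW : W ∈ unitary (H →L[ℂ] H))
    (ψ : H) (hψ : ‖ψ‖ = 1) :
    Dpsi U W ψ ≤ Dpsi U V ψ + Dpsi V W ψ := by
  have key : ∀ (A B : H →L[ℂ] H), ⟪ψ, (star A * B) ψ⟫_ℂ = ⟪A ψ, B ψ⟫_ℂ := by
    intro A B
    rw [ContinuousLinearMap.mul_apply, ContinuousLinearMap.star_eq_adjoint,
      ContinuousLinearMap.adjoint_inner_right]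
  have hx : ‖U ψ‖ = 1 := by rw [U.norm_map_of_mem_unitary hU, hψ]
  have hy : ‖V ψ‖ = 1 := by rw [V.norm_map_of_mem_unitary hV, hψ]
  have hz : ‖W ψ‖ = 1 := by rw [W.norm_map_of_mem_unitary hW, hψ]
  simp only [Dpsi, key]
  exact tri_unit (U ψ) (V ψ) (W ψ) hx hy hz

private lemma Dpsi_le_one (U V : H →L[ℂ] H) (ψ : H) : Dpsi U V ψ ≤ 1 :=
  Real.sqrt_le_one.mpr (by nlinarith [sq_nonneg ‖⟪ψ, (star U * V) ψ⟫_ℂ‖])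

private lemma bddAbove_set (U V : H →L[ℂ] H) :
    BddAbove {d : ℝ | ∃ ψ : H, ‖ψ‖ = 1 ∧ d = Dpsi U V ψ} := by
  refine ⟨1, fun d hd => ?_⟩
  obtain ⟨ψ, _, rfl⟩ := hd
  exact Dpsi_le_one U V ψ

private lemma uDist_nonneg (U V : H →L[ℂ] H) : 0 ≤ uDist U V := by
  apply Real.sSup_nonneg
  rintro d ⟨ψ, _, rfl⟩
  exact Real.sqrt_nonneg _

theorem stmt_12 (U V W : H →L[ℂ] H) (hU : U ∈ unitary (H →L[ℂ] H))
    (hV : V ∈ unitary (H →L[ℂ] H)) (hW : W ∈ unitary (H →L[ℂ] H)) :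
    uDist U W ≤ uDist U V + uDist V W := by
  apply Real.sSup_le
  · rintro d ⟨ψ, hψ, rfl⟩
    calc Dpsi U W ψ ≤ Dpsi U V ψ + Dpsi V W ψ := Dpsi_tri hU hV hW ψ hψ
      _ ≤ uDist U V + uDist V W :=
        add_le_add (le_csSup (bddAbove_set U V) ⟨ψ, hψ, rfl⟩)
          (le_csSup (bddAbove_set V W) ⟨ψ, hψ, rfl⟩)
  · exact add_nonneg (uDist_nonneg U V) (uDist_nonneg V W)
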